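/- For every integer ℓ ≥ 0 and every w ∈ 𝔡_1, one has Φ_ℓ(z_1 w) = Σ_{j=0}^{ℓ} (−ξ_1)^{ℓ−j} z_1 Φ_j(w). -/

import Mathlib

open scoped BigOperators

noncomputable section

attribute [local instance 10] Classical.propDecidable

/-- The `q`-integer `[n] = (1 - q^n)/(1 - q)`. -/
def qint (q : ℝ) (n : ℕ) : ℝ := (1 - q ^ n) / (1 - q)

/-- `I(r,n)`: multi-indices of positive integers of depth `r` and weight `n`. -/
def Ifin (r n : ℕ) : Finset (Fin r → ℕ) :=
  (Fintype.piFinset fun _ : Fin r => Finset.Icc 1 n).filter fun c => (∑ i, c i) = n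

/-- `I₀(r,n)`: admissible multi-indices (first entry at least 2). -/
def I0fin (r n : ℕ) : Finset (Fin r → ℕ) :=
  (Ifin r n).filter fun c => ∀ h : 0 < r, 2 ≤ c ⟨0, h⟩

/-- The `q`-analogue of the multiple zeta value,
`ζ_q(α) = Σ_{m_1 > ... > m_r > 0} Π_j q^{(α_j - 1) m_j}/[m_j]^{α_j}`. -/
def zetaQ (q : ℝ) {r : ℕ} (α : Fin r → ℕ) : ℝ :=
  ∑' m : {m : Fin r → ℕ // (∀ i j : Fin r, i < j → m j < m i) ∧ ∀ i, 0 < m i},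
    ∏ j, q ^ ((α j - 1) * m.1 j) / qint q (m.1 j) ^ α j

/-- `K_{b,n}(M) = Σ_{α ∈ I₀(b,n)} Σ_{m_1 > ... > m_{b-1} > m_b = M} Π_j q^{(α_j-1)m_j}/[m_j]^{α_j}`. -/
def Kfun (q : ℝ) (b n M : ℕ) : ℝ :=
  ∑ α ∈ I0fin b n,
    ∑' m : {m : Fin b → ℕ //
        (∀ i j : Fin b, i < j → m j < m i) ∧
          ∀ h : 0 < b, m ⟨b - 1, Nat.sub_lt h Nat.one_pos⟩ = M},
      ∏ j, q ^ ((α j - 1) * m.1 j) / qint q (m.1 j) ^ α j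

/-- `f_ℓ(N,M) = Σ_{N = k_1 > k_2 > ... > k_ℓ > M} (q^{k_1-M}/[k_1-M]) Π_{j=2}^{ℓ} 1/[k_j-M]`. -/
def fS (q : ℝ) (l N M : ℕ) : ℝ :=
  ∑ k ∈ (Fintype.piFinset fun _ : Fin l => Finset.Ioc M N).filter
      (fun k => (∀ i j : Fin l, i < j → k j < k i) ∧ ∀ h : 0 < l, k ⟨0, h⟩ = N),
    ∏ j : Fin l, (if (j : ℕ) = 0 then q ^ (k j - M) else 1) / qint q (k j - M)

/-- `g_{ℓ,β}(M) = Σ_{M = m_1 ≥ m_2 ≥ ... ≥ m_ℓ ≥ 1} (q^{(β-1)m_1}/[m_1]^β) Π_{j=2}^{ℓ} q^{m_j}/[m_j]`. -/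
def gS (q : ℝ) (l β M : ℕ) : ℝ :=
  ∑ m ∈ (Fintype.piFinset fun _ : Fin l => Finset.Icc 1 M).filter
      (fun m => (∀ i j : Fin l, i ≤ j → m j ≤ m i) ∧ ∀ h : 0 < l, m ⟨0, h⟩ = M),
    ∏ j : Fin l, if (j : ℕ) = 0 then q ^ ((β - 1) * m j) / qint q (m j) ^ β
      else q ^ m j / qint q (m j)

/-- `h_{r,ℓ}(N_1,...,N_r,M) = Σ_{c ∈ I(r,ℓ)} (Π_{j=1}^{r-1} f_{c_j}(N_j,N_{j+1})) f_{c_r}(N_r,M)`. -/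
def hS (q : ℝ) (r l : ℕ) (N : Fin r → ℕ) (M : ℕ) : ℝ :=
  ∑ c ∈ Ifin r l,
    ∏ j : Fin r, fS q (c j) (N j) (if h : (j : ℕ) + 1 < r then N ⟨(j : ℕ) + 1, h⟩ else M)

/-- `p(n_1,...,n_s;m) = (q^{n_1-m}/[n_1-m]) Π_{j=2}^{s} 1/[n_j-m]`, with `p(∅;m) = 1`. -/
def pS (q : ℝ) {s : ℕ} (n : Fin s → ℕ) (m : ℕ) : ℝ :=
  ∏ j : Fin s, (if (j : ℕ) = 0 then q ^ (n j - m) else 1) / qint q (n j - m)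

/-! ### The algebras 𝔡, 𝔡_ξ and 𝔡₁ -/

/-- The alphabet `S = {z_k}_{k ≥ 1} ∪ {ξ_k}_{k ≥ 1}`: `Sum.inl k = z_k`, `Sum.inr k = ξ_k`. -/
abbrev Letter : Type := ℕ+ ⊕ ℕ+

/-- The noncommutative polynomial algebra 𝔡 over ℤ freely generated by `S`. -/
abbrev Dfree : Type := MonoidAlgebra ℤ (FreeMonoid Letter)

/-- The subalgebra 𝔡_ξ generated by the `ξ_k`, realized as a free algebra on `{ξ_k}_{k≥1}`. -/
abbrev DXi : Type := MonoidAlgebra ℤ (FreeMonoid ℕ+)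

/-- The subalgebra 𝔡₁ generated by `z_1` and `ξ_1`, realized as a free algebra on two letters
(`false = z_1`, `true = ξ_1`). -/
abbrev DOne : Type := MonoidAlgebra ℤ (FreeMonoid Bool)

/-- The generator `z_k` of 𝔡. -/
def zL (k : ℕ+) : Dfree := MonoidAlgebra.single (FreeMonoid.of (Sum.inl k)) 1

/-- The generator `ξ_k` of 𝔡. -/
def xiL (k : ℕ+) : Dfree := MonoidAlgebra.single (FreeMonoid.of (Sum.inr k)) 1

/-- The generator `ξ_k` of 𝔡_ξ. -/
def xiX (k : ℕ+) : DXi := MonoidAlgebra.single (FreeMonoid.of k) 1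

/-- The generator `z_1` of 𝔡₁. -/
def zO : DOne := MonoidAlgebra.single (FreeMonoid.of false) 1

/-- The generator `ξ_1` of 𝔡₁. -/
def xiO : DOne := MonoidAlgebra.single (FreeMonoid.of true) 1

/-- `z_k` for a natural number index `k ≥ 1` (junk value `0` for `k = 0`). -/
def zOf (k : ℕ) : Dfree := if h : 0 < k then zL ⟨k, h⟩ else 0

/-- `ξ_k ∈ 𝔡_ξ` for a natural number index `k ≥ 1` (junk value `0` for `k = 0`). -/
def xiOf (k : ℕ) : DXi := if h : 0 < k then xiX ⟨k, h⟩ else 0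

/-- The canonical embedding `𝔡_ξ ↪ 𝔡`. -/
def toD (v : DXi) : Dfree := MonoidAlgebra.ofCoeff (Finsupp.mapDomain (FreeMonoid.map Sum.inr) v.coeff)

/-- The canonical embedding `𝔡₁ ↪ 𝔡` (`false ↦ z_1`, `true ↦ ξ_1`). -/
def toD1 (w : DOne) : Dfree :=
  MonoidAlgebra.ofCoeff (Finsupp.mapDomain (FreeMonoid.map fun b => if b then Sum.inr 1 else Sum.inl 1) w.coeff)

/-- `J_{z_k}(m) = q^{(k-1)m}/[m]^k` and `J_{ξ_k}(m) = q^{km}/[m]^k`. -/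
def Jlet (q : ℝ) : Letter → ℕ → ℝ
  | Sum.inl k, m => q ^ (((k : ℕ) - 1) * m) / qint q m ^ (k : ℕ)
  | Sum.inr k, m => q ^ ((k : ℕ) * m) / qint q m ^ (k : ℕ)

/-- `A_w(M) = Σ_{M > m_1 > ... > m_r > 0} J_{u_1}(m_1) ⋯ J_{u_r}(m_r)` for a word `w = u_1 ⋯ u_r`. -/
def AW (q : ℝ) (w : List Letter) (M : ℕ) : ℝ :=
  ∑ m ∈ (Fintype.piFinset fun _ : Fin w.length => Finset.Ioo 0 M).filter
      (fun m => ∀ i j, i < j → m j < m i),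
    ∏ j, Jlet q (w.get j) (m j)

/-- `A*_w(M) = Σ_{M > m_1 ≥ ... ≥ m_r ≥ 1} J_{u_1}(m_1) ⋯ J_{u_r}(m_r)` for a word `w = u_1 ⋯ u_r`. -/
def AstarW (q : ℝ) (w : List Letter) (M : ℕ) : ℝ :=
  ∑ m ∈ (Fintype.piFinset fun _ : Fin w.length => Finset.Ioo 0 M).filter
      (fun m => ∀ i j, i ≤ j → m j ≤ m i),
    ∏ j, Jlet q (w.get j) (m j)

/-- The ℤ-linear extension `A(M) : 𝔡 → ℝ`. -/
def Amap (q : ℝ) (x : Dfree) (M : ℕ) : ℝ :=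
  Finsupp.sum x.coeff fun w a => (a : ℝ) * AW q (FreeMonoid.toList w) M

/-- The ℤ-linear extension `A*(M) : 𝔡 → ℝ`. -/
def Astarmap (q : ℝ) (x : Dfree) (M : ℕ) : ℝ :=
  Finsupp.sum x.coeff fun w a => (a : ℝ) * AstarW q (FreeMonoid.toList w) M

/-- The map `ρ` on words:  `ρ(1,w) = w`, `ρ(v,1) = v`,
`ρ(ξ_k v, z_ℓ w) = ξ_k ρ(v, z_ℓ w) + z_ℓ ρ(ξ_k v, w) + z_{k+ℓ} ρ(v,w)`, and
`ρ(ξ_k v, ξ_ℓ w) = ξ_k ρ(v, ξ_ℓ w) + ξ_ℓ ρ(ξ_k v, w) + ξ_{k+ℓ} ρ(v,w)`. -/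
def rhoW : List ℕ+ → List Letter → Dfree
  | [], w => MonoidAlgebra.single (FreeMonoid.ofList w) 1
  | k :: v, [] => MonoidAlgebra.single (FreeMonoid.ofList ((k :: v).map Sum.inr)) 1
  | k :: v, Sum.inl l :: w =>
      xiL k * rhoW v (Sum.inl l :: w) + zL l * rhoW (k :: v) w + zL (k + l) * rhoW v w
  | k :: v, Sum.inr l :: w =>
      xiL k * rhoW v (Sum.inr l :: w) + xiL l * rhoW (k :: v) w + xiL (k + l) * rhoW v w
  termination_by v w => v.length + w.length

/-- The ℤ-bilinear map `ρ : 𝔡_ξ × 𝔡 → 𝔡`. -/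
def rho (v : DXi) (x : Dfree) : Dfree :=
  Finsupp.sum v.coeff fun vw a =>
    Finsupp.sum x.coeff fun xw b => (a * b) • rhoW (FreeMonoid.toList vw) (FreeMonoid.toList xw)

/-- `ξ_k ∘ ·` on words: `ξ_k ∘ 1 = 0` and `ξ_k ∘ (ξ_ℓ v) = ξ_{k+ℓ} v`. -/
def circW (k : ℕ+) : List ℕ+ → DXi
  | [] => 0
  | l :: v => MonoidAlgebra.single (FreeMonoid.ofList ((k + l) :: v)) 1

/-- The ℤ-linear map `ξ_k ∘ · : 𝔡_ξ → 𝔡_ξ`. -/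
def circ (k : ℕ+) (x : DXi) : DXi :=
  Finsupp.sum x.coeff fun w a => a • circW k (FreeMonoid.toList w)

/-- The map `d` on words: `d(1) = 1` and `d(ξ_k v) = ξ_k d(v) + ξ_k ∘ d(v)`. -/
def dW : List ℕ+ → DXi
  | [] => 1
  | k :: v => xiX k * dW v + circ k (dW v)

/-- The ℤ-linear map `d : 𝔡_ξ → 𝔡_ξ`. -/
def dmap (v : DXi) : DXi := Finsupp.sum v.coeff fun w a => a • dW (FreeMonoid.toList w)

/-- The maps `φ_s` on words of 𝔡₁: `φ_0 = id`, `φ_s(1) = ξ_1 z_1^{s-1}` for `s ≥ 1`,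
`φ_s(z_1 w) = z_1 φ_s(w) + ξ_1 Σ_{i=1}^{s} z_1^i φ_{s-i}(w)`, and
`φ_s(ξ_1 w) = ξ_1 Σ_{i=0}^{s} z_1^i φ_{s-i}(w)`. -/
def phiW : ℕ → List Bool → DOne
  | s, [] =>
      if s = 0 then 1
      else MonoidAlgebra.single (FreeMonoid.ofList (true :: List.replicate (s - 1) false)) 1
  | s, false :: w =>
      zO * phiW s w +
        ∑ i ∈ Finset.Icc 1 s, xiO * zO ^ i * phiW (s - i) w
  | s, true :: w =>
      ∑ i ∈ Finset.range (s + 1), xiO * zO ^ i * phiW (s - i) w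
  termination_by _ w => w.length

/-- The ℤ-linear maps `φ_s : 𝔡₁ → 𝔡₁`. -/
def phi (s : ℕ) (x : DOne) : DOne := Finsupp.sum x.coeff fun w a => a • phiW s (FreeMonoid.toList w)

/-- `Φ_0 = id` and `Φ_ℓ = Σ_{r=1}^{ℓ} (-1)^r Σ_{c ∈ I(r,ℓ)} φ_{c_1} ⋯ φ_{c_r}` for `ℓ ≥ 1`. -/
def PhiM : ℕ → DOne → DOne
  | 0 => id
  | l + 1 => fun x =>
      ∑ r ∈ Finset.Icc 1 (l + 1),
        (-1 : ℤ) ^ r •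
          ∑ c ∈ Ifin r (l + 1), ((List.ofFn fun j : Fin r => phi (c j)).foldr (· ∘ ·) id) x

/-- `Z_s(w) = Σ_{ℓ=0}^{s} ρ(d(ξ_1^{s-ℓ}), Φ_ℓ(w))`. -/
def Zmap (s : ℕ) (w : DOne) : Dfree :=
  ∑ l ∈ Finset.range (s + 1), rho (dmap (xiX 1 ^ (s - l))) (toD1 (PhiM l w))

open Finset

lemma phi_add (s : ℕ) (x y : DOne) : phi s (x + y) = phi s x + phi s y := by
  unfold phi
  rw [MonoidAlgebra.coeff_add]
  exact Finsupp.sum_add_index' (fun w => by simp) (fun w b₁ b₂ => add_smul _ _ _)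

/-- `phi s` as an additive monoid hom. -/
def phiHom (s : ℕ) : DOne →+ DOne := AddMonoidHom.mk' (phi s) (phi_add s)

lemma phi_apply_single (s : ℕ) (w : FreeMonoid Bool) (a : ℤ) :
    phi s (MonoidAlgebra.single w a) = a • phiW s (FreeMonoid.toList w) := by
  unfold phi
  rw [MonoidAlgebra.coeff_single]
  exact Finsupp.sum_single_index (by simp)

lemma phiW_zero (w : List Bool) : phiW 0 w = MonoidAlgebra.single (FreeMonoid.ofList w) 1 := by
  induction w with
  | nil => simp [phiW, MonoidAlgebra.one_def]
  | cons b w ih =>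
      cases b <;> simp [phiW, ih, zO, xiO, MonoidAlgebra.single_mul_single]

lemma phi_zero_apply (x : DOne) : phi 0 x = x := by
  unfold phi
  conv_rhs => rw [← MonoidAlgebra.sum_coeff_single x]
  refine Finsupp.sum_congr fun w hw => ?_
  rw [phiW_zero]
  simp [MonoidAlgebra.smul_single]

lemma phi_sum {α : Type*} (s : ℕ) (t : Finset α) (f : α → DOne) :
    phi s (∑ i ∈ t, f i) = ∑ i ∈ t, phi s (f i) := map_sum (phiHom s) f t

lemma phi_zsmul (s : ℕ) (n : ℤ) (x : DOne) : phi s (n • x) = n • phi s x :=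
  map_zsmul (phiHom s) n x

lemma phi_sub (s : ℕ) (x y : DOne) : phi s (x - y) = phi s x - phi s y :=
  map_sub (phiHom s) x y

lemma phi_mul_z (s : ℕ) (x : DOne) :
    phi s (zO * x) = zO * phi s x + ∑ i ∈ Finset.Icc 1 s, xiO * zO ^ i * phi (s - i) x := by
  induction x using MonoidAlgebra.induction_linear with
  | zero =>
      have h0 : ∀ t, phi t (0 : DOne) = 0 := fun t => map_zero (phiHom t)
      rw [mul_zero, h0, mul_zero, zero_add]
      exact (Finset.sum_eq_zero fun i _ => by rw [h0, mul_zero]).symm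
  | add x y hx hy =>
      rw [mul_add, phi_add, hx, hy, phi_add, mul_add,
        show (∑ i ∈ Finset.Icc 1 s, xiO * zO ^ i * phi (s - i) (x + y))
          = ∑ i ∈ Finset.Icc 1 s,
              (xiO * zO ^ i * phi (s - i) x + xiO * zO ^ i * phi (s - i) y) from
          Finset.sum_congr rfl fun i _ => by rw [phi_add, mul_add],
        Finset.sum_add_distrib]
      abel
  | single w a =>
      have h1 : zO * MonoidAlgebra.single w a
          = MonoidAlgebra.single (FreeMonoid.of false * w) a := by
        rw [zO, MonoidAlgebra.single_mul_single, one_mul]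
      rw [h1, phi_apply_single, phi_apply_single]
      have h2 : FreeMonoid.toList (FreeMonoid.of false * w) = false :: FreeMonoid.toList w := rfl
      rw [h2]
      rw [show phiW s (false :: FreeMonoid.toList w) = zO * phiW s (FreeMonoid.toList w) +
          ∑ i ∈ Finset.Icc 1 s, xiO * zO ^ i * phiW (s - i) (FreeMonoid.toList w) by rw [phiW]]
      rw [smul_add, mul_smul_comm, Finset.smul_sum]
      congr 1
      refine Finset.sum_congr rfl fun i hi => ?_
      rw [phi_apply_single, mul_smul_comm]

lemma phi_mul_xi (s : ℕ) (x : DOne) :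
    phi s (xiO * x) = ∑ i ∈ Finset.range (s + 1), xiO * zO ^ i * phi (s - i) x := by
  induction x using MonoidAlgebra.induction_linear with
  | zero =>
      have h0 : ∀ t, phi t (0 : DOne) = 0 := fun t => map_zero (phiHom t)
      rw [mul_zero, h0]
      exact (Finset.sum_eq_zero fun i _ => by rw [h0, mul_zero]).symm
  | add x y hx hy =>
      rw [mul_add, phi_add, hx, hy,
        show (∑ i ∈ Finset.range (s + 1), xiO * zO ^ i * phi (s - i) (x + y))
          = ∑ i ∈ Finset.range (s + 1),
              (xiO * zO ^ i * phi (s - i) x + xiO * zO ^ i * phi (s - i) y) from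
          Finset.sum_congr rfl fun i _ => by rw [phi_add, mul_add],
        Finset.sum_add_distrib]
  | single w a =>
      have h1 : xiO * MonoidAlgebra.single w a
          = MonoidAlgebra.single (FreeMonoid.of true * w) a := by
        rw [xiO, MonoidAlgebra.single_mul_single, one_mul]
      rw [h1, phi_apply_single]
      have h2 : FreeMonoid.toList (FreeMonoid.of true * w) = true :: FreeMonoid.toList w := rfl
      rw [h2]
      rw [show phiW s (true :: FreeMonoid.toList w) =
          ∑ i ∈ Finset.range (s + 1), xiO * zO ^ i * phiW (s - i) (FreeMonoid.toList w)
          by rw [phiW]]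
      rw [Finset.smul_sum]
      refine Finset.sum_congr rfl fun i hi => ?_
      rw [phi_apply_single, mul_smul_comm]

lemma phi_mul_zsubxi (s : ℕ) (x : DOne) :
    phi s ((zO - xiO) * x) = (zO - xiO) * phi s x := by
  rw [sub_mul, phi_sub, phi_mul_z, phi_mul_xi, sub_mul]
  rw [show (∑ i ∈ Finset.range (s + 1), xiO * zO ^ i * phi (s - i) x)
      = xiO * zO ^ 0 * phi (s - 0) x + ∑ i ∈ Finset.Icc 1 s, xiO * zO ^ i * phi (s - i) x by
    rw [show Finset.range (s + 1) = insert 0 (Finset.Icc 1 s) by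
        ext i; simp [Nat.lt_succ_iff]; omega,
      Finset.sum_insert (by simp)]]
  rw [pow_zero, mul_one, Nat.sub_zero]
  abel

lemma mem_Ifin {r n : ℕ} {c : Fin r → ℕ} :
    c ∈ Ifin r n ↔ (∀ i, 1 ≤ c i) ∧ ∑ i, c i = n := by
  unfold Ifin
  simp only [Finset.mem_filter, Fintype.mem_piFinset, Finset.mem_Icc]
  constructor
  · rintro ⟨h1, h2⟩; exact ⟨fun i => (h1 i).1, h2⟩
  · rintro ⟨h1, h2⟩
    refine ⟨fun i => ⟨h1 i, ?_⟩, h2⟩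
    rw [← h2]
    exact Finset.single_le_sum (fun j _ => Nat.zero_le _) (Finset.mem_univ i)

lemma Ifin_empty_of_lt {r n : ℕ} (h : n < r) : Ifin r n = ∅ := by
  rw [Finset.eq_empty_iff_forall_notMem]
  intro c hc
  rcases mem_Ifin.mp hc with ⟨h1, h2⟩
  have : r ≤ n := by
    calc r = ∑ _i : Fin r, 1 := by simp
    _ ≤ ∑ i, c i := Finset.sum_le_sum fun i _ => h1 i
    _ = n := h2
  omega

lemma Ifin_zero_empty {n : ℕ} (h : n ≠ 0) : Ifin 0 n = ∅ := by
  rw [Finset.eq_empty_iff_forall_notMem]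
  intro c hc
  rcases mem_Ifin.mp hc with ⟨_, h2⟩
  simp at h2
  exact h h2.symm

lemma sum_Ifin_succ {M : Type*} [AddCommMonoid M] (r n : ℕ) (g : (Fin (r+1) → ℕ) → M) :
    ∑ c ∈ Ifin (r+1) n, g c
      = ∑ s ∈ Finset.Icc 1 n, ∑ c ∈ Ifin r (n - s), g (Fin.cons s c) := by
  rw [← Finset.sum_sigma (Finset.Icc 1 n) (fun s => Ifin r (n - s))
      (fun p => g (Fin.cons p.1 p.2))]
  refine Finset.sum_nbij' (i := fun c => ⟨c 0, Fin.tail c⟩) (j := fun p => Fin.cons p.1 p.2)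
    ?_ ?_ ?_ ?_ ?_
  · intro c hc
    rcases mem_Ifin.mp hc with ⟨h1, h2⟩
    rw [Fin.sum_univ_succ] at h2
    have hc0 : c 0 ≤ n := by omega
    refine Finset.mem_sigma.mpr ⟨Finset.mem_Icc.mpr ⟨h1 0, hc0⟩,
      mem_Ifin.mpr ⟨fun i => h1 _, ?_⟩⟩
    show (∑ i : Fin r, c i.succ) = n - c 0
    omega
  · rintro ⟨s, c⟩ hp
    rcases Finset.mem_sigma.mp hp with ⟨hs, hc⟩
    rcases Finset.mem_Icc.mp hs with ⟨hs1, hs2⟩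
    rcases mem_Ifin.mp hc with ⟨h1, h2⟩
    refine mem_Ifin.mpr ⟨fun i => ?_, ?_⟩
    · refine Fin.cases ?_ ?_ i
      · simpa using hs1
      · intro j; simpa using h1 j
    · rw [Fin.sum_cons, h2]
      omega
  · intro c _; exact Fin.cons_self_tail c
  · rintro ⟨s, c⟩ _
    simp [Fin.cons_zero, Fin.tail_cons]
  · intro c _
    rw [Fin.cons_self_tail c]

lemma foldr_succ (r : ℕ) (c : Fin (r+1) → ℕ) (x : DOne) :
    ((List.ofFn fun j : Fin (r+1) => phi (c j)).foldr (· ∘ ·) id) x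
      = phi (c 0) (((List.ofFn fun j : Fin r => phi (Fin.tail c j)).foldr (· ∘ ·) id) x) := by
  rw [List.ofFn_succ]
  rfl

lemma sum_Icc_one {M : Type*} [AddCommMonoid M] (n : ℕ) (f : ℕ → M) :
    ∑ r ∈ Finset.Icc 1 (n+1), f r = ∑ r ∈ Finset.range (n+1), f (r+1) := by
  refine Finset.sum_nbij' (i := fun r => r - 1) (j := fun r => r + 1) ?_ ?_ ?_ ?_ ?_
  · intro a ha; simp only [Finset.mem_Icc] at ha; simp only [Finset.mem_range]; omega
  · intro a ha; simp only [Finset.mem_range] at ha; simp only [Finset.mem_Icc]; omega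
  · intro a ha; simp only [Finset.mem_Icc] at ha; omega
  · intro a _; omega
  · intro a ha
    simp only [Finset.mem_Icc] at ha
    congr 1
    omega

lemma PhiM_eq_range (l m : ℕ) (hm : m ≤ l) (x : DOne) :
    PhiM m x = ∑ r ∈ Finset.range (l+1), (-1:ℤ)^r •
      ∑ c ∈ Ifin r m, ((List.ofFn fun j : Fin r => phi (c j)).foldr (· ∘ ·) id) x := by
  cases m with
  | zero =>
      rw [Finset.sum_eq_single_of_mem 0 (Finset.mem_range.mpr (Nat.succ_pos l))]
      · have h1 : Ifin 0 0 = {(default : Fin 0 → ℕ)} := by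
          refine Finset.eq_singleton_iff_unique_mem.mpr ⟨?_, fun c _ => Subsingleton.elim _ _⟩
          exact mem_Ifin.mpr ⟨fun i => i.elim0, by simp⟩
        rw [h1, Finset.sum_singleton, pow_zero, one_smul]
        rw [List.ofFn_zero]
        rfl
      · intro r _ hr
        rw [Ifin_empty_of_lt (Nat.pos_of_ne_zero hr), Finset.sum_empty, smul_zero]
  | succ m0 =>
      show (∑ r ∈ Finset.Icc 1 (m0+1), _) = _
      refine Finset.sum_subset ?_ ?_
      · intro r hr
        rcases Finset.mem_Icc.mp hr with ⟨h1, h2⟩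
        exact Finset.mem_range.mpr (by omega)
      · intro r hr hr2
        rw [Finset.mem_Icc, not_and_or] at hr2
        have he : Ifin r (m0+1) = ∅ := by
          rcases hr2 with h | h
          · have h0 : r = 0 := by omega
            subst h0
            exact Ifin_zero_empty (Nat.succ_ne_zero m0)
          · exact Ifin_empty_of_lt (by omega)
        rw [he, Finset.sum_empty, smul_zero]

lemma PhiM_succ (l : ℕ) (x : DOne) :
    PhiM (l+1) x = -∑ s ∈ Finset.Icc 1 (l+1), phi s (PhiM (l+1-s) x) := by
  have hdef : PhiM (l+1) x = ∑ r ∈ Finset.Icc 1 (l+1),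
      (-1:ℤ)^r • ∑ c ∈ Ifin r (l+1),
        ((List.ofFn fun j : Fin r => phi (c j)).foldr (· ∘ ·) id) x := rfl
  rw [hdef, sum_Icc_one]
  have step : ∀ r' ∈ Finset.range (l+1),
      ((-1:ℤ)^(r'+1) • ∑ c ∈ Ifin (r'+1) (l+1),
        ((List.ofFn fun j : Fin (r'+1) => phi (c j)).foldr (· ∘ ·) id) x)
      = ∑ s ∈ Finset.Icc 1 (l+1), (-1:ℤ)^(r'+1) • ∑ c ∈ Ifin r' (l+1-s),
          phi s (((List.ofFn fun j : Fin r' => phi (c j)).foldr (· ∘ ·) id) x) := by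
    intro r' _
    rw [sum_Ifin_succ r' (l+1)
      (fun c => ((List.ofFn fun j : Fin (r'+1) => phi (c j)).foldr (· ∘ ·) id) x)]
    rw [Finset.smul_sum]
    refine Finset.sum_congr rfl fun s _ => ?_
    congr 1
    refine Finset.sum_congr rfl fun c _ => ?_
    rw [foldr_succ]
    simp [Fin.cons_zero, Fin.tail_cons]
  rw [Finset.sum_congr rfl step, Finset.sum_comm, ← Finset.sum_neg_distrib]
  refine Finset.sum_congr rfl fun s hs => ?_
  rcases Finset.mem_Icc.mp hs with ⟨hs1, hs2⟩
  have hA : phi s (PhiM (l+1-s) x) = ∑ r' ∈ Finset.range (l+1),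
      (-1:ℤ)^r' • ∑ c ∈ Ifin r' (l+1-s),
        phi s (((List.ofFn fun j : Fin r' => phi (c j)).foldr (· ∘ ·) id) x) := by
    rw [PhiM_eq_range l (l+1-s) (by omega) x, phi_sum]
    refine Finset.sum_congr rfl fun r' _ => ?_
    rw [phi_zsmul, phi_sum]
  rw [hA, ← Finset.sum_neg_distrib]
  refine Finset.sum_congr rfl fun r' _ => ?_
  rw [pow_succ, mul_smul, neg_one_zsmul, smul_neg]


lemma phi_zero_right (s : ℕ) : phi s (0 : DOne) = 0 := map_zero (phiHom s)

lemma conv_zero (m : ℕ) (hm : 1 ≤ m) (x : DOne) :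
    ∑ k ∈ Finset.range (m+1), phi k (PhiM (m-k) x) = 0 := by
  obtain ⟨m0, rfl⟩ := Nat.exists_eq_add_of_le hm
  rw [Nat.add_comm 1 m0]
  rw [Finset.sum_range_succ' (fun k => phi k (PhiM (m0+1-k) x)) (m0+1)]
  rw [Nat.sub_zero, phi_zero_apply, PhiM_succ, sum_Icc_one]
  exact add_neg_cancel _

lemma range_split {M : Type*} [AddCommMonoid M] (s : ℕ) (f : ℕ → M) :
    ∑ i ∈ Finset.range (s+1), f i = f 0 + ∑ i ∈ Finset.Icc 1 s, f i := by
  rw [show Finset.range (s + 1) = insert 0 (Finset.Icc 1 s) by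
      ext i; simp [Nat.lt_succ_iff]; omega,
    Finset.sum_insert (by simp)]

lemma swap_tri {M : Type*} [AddCommMonoid M] (N : ℕ) (f : ℕ → ℕ → M) :
    ∑ s ∈ Finset.Icc 1 N, ∑ i ∈ Finset.Icc 1 s, f s i
      = ∑ i ∈ Finset.Icc 1 N, ∑ s ∈ Finset.Icc i N, f s i := by
  simp only [← Finset.Ico_add_one_right_eq_Icc]
  exact (Finset.sum_Ico_Ico_comm 1 (N+1) fun i s => f s i).symm

lemma sum_Icc_shift {M : Type*} [AddCommMonoid M] (i N : ℕ) (g : ℕ → M) :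
    ∑ s ∈ Finset.Icc i N, g (s - i) = ∑ k ∈ Finset.range (N+1-i), g k := by
  refine Finset.sum_nbij' (i := fun s => s - i) (j := fun k => k + i) ?_ ?_ ?_ ?_ ?_
  · intro a ha; simp only [Finset.mem_Icc] at ha; simp only [Finset.mem_range]; omega
  · intro a ha; simp only [Finset.mem_range] at ha; simp only [Finset.mem_Icc]; omega
  · intro a ha; simp only [Finset.mem_Icc] at ha; omega
  · intro a ha; simp only [Finset.mem_range] at ha; omega
  · intro a _; rfl

lemma Icc_succ_insert (n : ℕ) : Finset.Icc 1 (n+1) = insert (n+1) (Finset.Icc 1 n) := by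
  ext i; simp [Finset.mem_Icc]; omega

lemma PhiM_sub_mul (l : ℕ) (x : DOne) :
    PhiM l (zO * x) - PhiM l (xiO * x) = (zO - xiO) * PhiM l x := by
  induction l using Nat.strong_induction_on with
  | _ l ih =>
  match l with
  | 0 =>
      rw [show PhiM 0 (zO*x) = zO*x from rfl, show PhiM 0 (xiO*x) = xiO*x from rfl,
        show PhiM 0 x = x from rfl, sub_mul]
  | (l0+1) =>
      rw [PhiM_succ l0 (zO*x), PhiM_succ l0 (xiO*x), PhiM_succ l0 x]
      have hterm : ∀ s ∈ Finset.Icc 1 (l0+1),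
          (-(phi s (PhiM (l0+1-s) (zO*x))) + phi s (PhiM (l0+1-s) (xiO*x)))
            = -((zO - xiO) * phi s (PhiM (l0+1-s) x)) := by
        intro s hs
        rcases Finset.mem_Icc.mp hs with ⟨h1, h2⟩
        rw [← phi_mul_zsubxi, ← ih (l0+1-s) (by omega), phi_sub]
        abel
      rw [sub_neg_eq_add, ← Finset.sum_neg_distrib, ← Finset.sum_add_distrib,
        mul_neg, Finset.mul_sum, ← Finset.sum_neg_distrib]
      exact Finset.sum_congr rfl hterm

/-- Helper: `Pz 0 x = 0` and `Pz (l+1) x = PhiM l (z x)`. -/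
def Pz : ℕ → DOne → DOne
  | 0, _ => 0
  | l+1, x => PhiM l (zO * x)

lemma Skey (L : ℕ) (v : ℕ → DOne) :
    ∑ s ∈ Finset.Icc 1 (L+1), ∑ i ∈ Finset.range (s+1), xiO * zO^i * phi (s-i) (v (L+1-s))
    = xiO * (∑ s ∈ Finset.Icc 1 (L+1), phi s (v (L+1-s)))
      + ∑ i ∈ Finset.Icc 1 (L+1), xiO * zO^i *
          (∑ k ∈ Finset.range (L+1+1-i), phi k (v (L+1-i-k))) := by
  have h1 : ∀ s ∈ Finset.Icc 1 (L+1),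
      (∑ i ∈ Finset.range (s+1), xiO * zO^i * phi (s-i) (v (L+1-s)))
      = xiO * phi s (v (L+1-s))
        + ∑ i ∈ Finset.Icc 1 s, xiO * zO^i * phi (s-i) (v (L+1-s)) := by
    intro s _
    rw [range_split s (fun i => xiO * zO^i * phi (s-i) (v (L+1-s))), pow_zero, mul_one,
      Nat.sub_zero]
  rw [Finset.sum_congr rfl h1, Finset.sum_add_distrib, ← Finset.mul_sum]
  congr 1
  rw [swap_tri (L+1) (fun s i => xiO * zO^i * phi (s-i) (v (L+1-s)))]
  refine Finset.sum_congr rfl fun i hi => ?_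
  rcases Finset.mem_Icc.mp hi with ⟨hi1, hi2⟩
  have h2 : ∀ s ∈ Finset.Icc i (L+1),
      xiO * zO^i * phi (s-i) (v (L+1-s))
        = (fun k => xiO * zO^i * phi k (v (L+1-i-k))) (s - i) := by
    intro s hs
    rcases Finset.mem_Icc.mp hs with ⟨hs1, hs2⟩
    dsimp only
    rw [show L+1-i-(s-i) = L+1-s from by omega]
  rw [Finset.sum_congr rfl h2, sum_Icc_shift i (L+1) (fun k => xiO * zO^i * phi k (v (L+1-i-k))),
    Finset.mul_sum]

lemma SkeyA (L : ℕ) (x : DOne) :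
    ∑ s ∈ Finset.Icc 1 (L+1), ∑ i ∈ Finset.range (s+1), xiO * zO^i * phi (s-i) (PhiM (L+1-s) x)
    = xiO * (∑ s ∈ Finset.Icc 1 (L+1), phi s (PhiM (L+1-s) x))
      + ∑ i ∈ Finset.Icc 1 (L+1), xiO * zO^i *
          (∑ k ∈ Finset.range (L+1+1-i), phi k (PhiM (L+1-i-k) x)) :=
  Skey L (fun m => PhiM m x)

lemma SkeyB (L : ℕ) (x : DOne) :
    ∑ s ∈ Finset.Icc 1 (L+1), ∑ i ∈ Finset.range (s+1), xiO * zO^i * phi (s-i) (Pz (L+1-s) x)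
    = xiO * (∑ s ∈ Finset.Icc 1 (L+1), phi s (Pz (L+1-s) x))
      + ∑ i ∈ Finset.Icc 1 (L+1), xiO * zO^i *
          (∑ k ∈ Finset.range (L+1+1-i), phi k (Pz (L+1-i-k) x)) :=
  Skey L (fun m => Pz m x)

lemma hWA (L : ℕ) (x : DOne) :
    ∑ i ∈ Finset.Icc 1 (L+1), xiO * zO^i *
        (∑ k ∈ Finset.range (L+1+1-i), phi k (PhiM (L+1-i-k) x))
      = xiO * zO^(L+1) * x := by
  rw [Finset.sum_eq_single_of_mem (L+1) (Finset.mem_Icc.mpr ⟨by omega, le_refl _⟩)]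
  · rw [show L+1+1-(L+1) = 1 from by omega, Finset.sum_range_one,
      show L+1-(L+1)-0 = 0 from by omega, phi_zero_apply]
    rfl
  · intro i hi hne
    rcases Finset.mem_Icc.mp hi with ⟨h1, h2⟩
    rw [show L+1+1-i = (L+1-i)+1 from by omega, conv_zero (L+1-i) (by omega) x, mul_zero]

lemma hSBWB (L : ℕ) (x : DOne) :
    xiO * (∑ s ∈ Finset.Icc 1 (L+1), phi s (Pz (L+1-s) x))
      + ∑ i ∈ Finset.Icc 1 (L+1), xiO * zO^i *
          (∑ k ∈ Finset.range (L+1+1-i), phi k (Pz (L+1-i-k) x))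
    = -(xiO * Pz (L+1) x) + xiO * zO^(L+1) * x := by
  match L with
  | 0 =>
      rw [Finset.Icc_self, Finset.sum_singleton, Finset.sum_singleton,
        show (0:ℕ)+1-1 = 0 from rfl, show (0:ℕ)+1+1-1 = 1 from rfl, Finset.sum_range_one,
        show (0:ℕ)+1-1-0 = 0 from rfl, show Pz 0 x = (0:DOne) from rfl,
        phi_zero_right, phi_zero_right, mul_zero, mul_zero, add_zero,
        show Pz (0+1) x = zO * x from rfl, pow_one]
      noncomm_ring
  | (L0+1) =>
      have hS : ∑ s ∈ Finset.Icc 1 (L0+1+1), phi s (Pz (L0+1+1-s) x)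
          = -Pz (L0+1+1) x := by
        rw [Icc_succ_insert (L0+1), Finset.sum_insert (by simp)]
        rw [show L0+1+1-(L0+1+1) = 0 from by omega, show Pz 0 x = (0:DOne) from rfl,
          phi_zero_right, zero_add]
        have hc : ∀ s ∈ Finset.Icc 1 (L0+1), phi s (Pz (L0+1+1-s) x)
            = phi s (PhiM (L0+1-s) (zO*x)) := by
          intro s hs
          rcases Finset.mem_Icc.mp hs with ⟨hs1, hs2⟩
          rw [show L0+1+1-s = (L0+1-s)+1 from by omega]
          rfl
        rw [Finset.sum_congr rfl hc,
          show Pz (L0+1+1) x = PhiM (L0+1) (zO*x) from rfl, PhiM_succ L0 (zO*x), neg_neg]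
      have hW : ∑ i ∈ Finset.Icc 1 (L0+1+1), xiO * zO^i *
            (∑ k ∈ Finset.range (L0+1+1+1-i), phi k (Pz (L0+1+1-i-k) x))
          = xiO * zO^(L0+1) * (zO * x) := by
        rw [Finset.sum_eq_single_of_mem (L0+1) (Finset.mem_Icc.mpr ⟨by omega, by omega⟩)]
        · rw [show L0+1+1+1-(L0+1) = 2 from by omega, Finset.sum_range_succ,
            Finset.sum_range_one,
            show L0+1+1-(L0+1)-0 = 1 from by omega, show L0+1+1-(L0+1)-1 = 0 from by omega,
            show Pz 0 x = (0:DOne) from rfl, phi_zero_right, add_zero, phi_zero_apply,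
            show Pz 1 x = zO * x from rfl]
        · intro i hi hne
          rcases Finset.mem_Icc.mp hi with ⟨h1, h2⟩
          by_cases hi2 : i = L0+1+1
          · subst hi2
            rw [show L0+1+1+1-(L0+1+1) = 1 from by omega, Finset.sum_range_one,
              show L0+1+1-(L0+1+1)-0 = 0 from by omega, show Pz 0 x = (0:DOne) from rfl,
              phi_zero_right, mul_zero]
          · have hi3 : i ≤ L0 := by omega
            rw [show L0+1+1+1-i = ((L0+1-i)+1)+1 from by omega, Finset.sum_range_succ,
              show L0+1+1-i-((L0+1-i)+1) = 0 from by omega, show Pz 0 x = (0:DOne) from rfl,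
              phi_zero_right, add_zero]
            have hc : ∀ k ∈ Finset.range ((L0+1-i)+1), phi k (Pz (L0+1+1-i-k) x)
                = phi k (PhiM (L0+1-i-k) (zO*x)) := by
              intro k hk
              have hk' := Finset.mem_range.mp hk
              rw [show L0+1+1-i-k = (L0+1-i-k)+1 from by omega]
              rfl
            rw [Finset.sum_congr rfl hc, conv_zero (L0+1-i) (by omega) (zO*x), mul_zero]
      rw [hS, hW, mul_neg, pow_succ (zO) (L0+1)]
      rw [show xiO * (zO ^ (L0+1) * zO) * x = xiO * zO ^ (L0+1) * (zO * x) by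
        rw [← mul_assoc, ← mul_assoc]]

lemma PhiM_mul_xi (l : ℕ) (x : DOne) :
    PhiM l (xiO * x) = xiO * PhiM l x - xiO * Pz l x := by
  induction l using Nat.strong_induction_on with
  | _ l ih =>
  match l with
  | 0 =>
      rw [show Pz 0 x = (0:DOne) from rfl, mul_zero, sub_zero]
      rfl
  | (L+1) =>
      rw [PhiM_succ L (xiO*x)]
      have h1 : ∀ s ∈ Finset.Icc 1 (L+1), phi s (PhiM (L+1-s) (xiO*x))
          = (∑ i ∈ Finset.range (s+1), xiO * zO^i * phi (s-i) (PhiM (L+1-s) x))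
            - ∑ i ∈ Finset.range (s+1), xiO * zO^i * phi (s-i) (Pz (L+1-s) x) := by
        intro s hs
        rcases Finset.mem_Icc.mp hs with ⟨hs1, hs2⟩
        rw [ih (L+1-s) (by omega), phi_sub, phi_mul_xi, phi_mul_xi]
      rw [Finset.sum_congr rfl h1, Finset.sum_sub_distrib, SkeyA L x, SkeyB L x, hWA L x,
        hSBWB L x]
      have hSA1 : (∑ s ∈ Finset.Icc 1 (L+1), phi s (PhiM (L+1-s) x)) = -PhiM (L+1) x := by
        rw [PhiM_succ L x, neg_neg]
      rw [hSA1, mul_neg]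
      abel

lemma PhiM_z_step (l : ℕ) (x : DOne) :
    PhiM (l+1) (zO * x) = zO * PhiM (l+1) x - xiO * PhiM l (zO * x) := by
  have e := PhiM_sub_mul (l+1) x
  have d := PhiM_mul_xi (l+1) x
  rw [show Pz (l+1) x = PhiM l (zO*x) from rfl] at d
  have e2 : PhiM (l+1) (zO * x)
      = (zO - xiO) * PhiM (l+1) x + (xiO * PhiM (l+1) x - xiO * PhiM l (zO*x)) := by
    rw [← d, ← e]
    abel
  rw [e2, sub_mul]
  abel

/-- For every integer `ℓ ≥ 0` and every `w ∈ 𝔡₁`,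
`Φ_ℓ(z_1 w) = Σ_{j=0}^{ℓ} (-ξ_1)^{ℓ-j} z_1 Φ_j(w)`. -/
theorem Phi_z_mul (l : ℕ) (w : DOne) :
    PhiM l (zO * w) = ∑ j ∈ Finset.range (l + 1), (-xiO) ^ (l - j) * zO * PhiM j w := by
  induction l with
  | zero =>
      rw [Finset.sum_range_one, show (0:ℕ)-0 = 0 from rfl, pow_zero, one_mul]
      rfl
  | succ l ih =>
      rw [PhiM_z_step l w, ih]
      conv_rhs => rw [Finset.sum_range_succ]
      rw [show l+1-(l+1) = 0 from by omega, pow_zero, one_mul]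
      have hc : ∀ j ∈ Finset.range (l+1), (-xiO)^(l+1-j) * zO * PhiM j w
          = -xiO * ((-xiO)^(l-j) * zO * PhiM j w) := by
        intro j hj
        have hj' := Finset.mem_range.mp hj
        rw [show l+1-j = (l-j)+1 from by omega, pow_succ',
          mul_assoc (-xiO) ((-xiO)^(l-j)) zO, mul_assoc (-xiO) _ (PhiM j w)]
      rw [Finset.sum_congr rfl hc, ← Finset.mul_sum, neg_mul]
      abel

end
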